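/- Let f : ℝ → ℝ be continuous and suppose lip f(x) < ∞ for every x ∈ ℝ (i.e., l_f^∞ = ∅). Then the set L_f^∞ = {x ∈ ℝ : Lip f(x) = ∞} is a G_δ set and is trim. -/

import Mathlib

open Set Filter MeasureTheory Topology
open scoped ENNReal NNReal

/-- `M_f(x,r) = sup { |f(x)-f(y)|/r : |x-y| ≤ r }`, valued in `[0,∞]`. -/
noncomputable def Mf (f : ℝ → ℝ) (x r : ℝ) : ℝ≥0∞ :=
  ⨆ y ∈ {y : ℝ | |x - y| ≤ r}, ENNReal.ofReal (|f x - f y| / r)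

/-- The big Lip function: `Lip f(x) = limsup_{r→0⁺} M_f(x,r)`. -/
noncomputable def bigLip (f : ℝ → ℝ) (x : ℝ) : ℝ≥0∞ :=
  Filter.limsup (fun r => Mf f x r) (𝓝[>] (0 : ℝ))

/-- The little lip function: `lip f(x) = liminf_{r→0⁺} M_f(x,r)`. -/
noncomputable def litLip (f : ℝ → ℝ) (x : ℝ) : ℝ≥0∞ :=
  Filter.liminf (fun r => Mf f x r) (𝓝[>] (0 : ℝ))

open Metric

set_option maxHeartbeats 1000000

namespace LipAux

lemma le_Mf (f : ℝ → ℝ) {x s y : ℝ} (h : |x - y| ≤ s) :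
    ENNReal.ofReal (|f x - f y| / s) ≤ Mf f x s :=
  le_iSup₂ (f := fun y (_ : y ∈ {y : ℝ | |x - y| ≤ s}) => ENNReal.ofReal (|f x - f y| / s)) y h

lemma Mf_le_of_forall {f : ℝ → ℝ} {x s c : ℝ} (hs : 0 < s)
    (h : ∀ y, |x - y| ≤ s → |f x - f y| ≤ c * s) : Mf f x s ≤ ENNReal.ofReal c := by
  refine iSup₂_le fun y hy => ?_
  exact ENNReal.ofReal_le_ofReal ((div_le_iff₀ hs).2 (by
    have := h y hy; linarith [this]))

lemma forall_of_Mf_le {f : ℝ → ℝ} {x s c : ℝ} (hs : 0 < s) (hc : 0 ≤ c)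
    (h : Mf f x s ≤ ENNReal.ofReal c) : ∀ y, |x - y| ≤ s → |f x - f y| ≤ c * s := by
  intro y hy
  have h1 : ENNReal.ofReal (|f x - f y| / s) ≤ ENNReal.ofReal c := (le_Mf f hy).trans h
  have h2 : |f x - f y| / s ≤ c := (ENNReal.ofReal_le_ofReal_iff hc).1 h1
  calc |f x - f y| = (|f x - f y| / s) * s := by field_simp
    _ ≤ c * s := by nlinarith [hs.le]

/-- Uniformly wild set: every scale `s ∈ (0, σ]` has a witness of `c`-oscillation. -/
def Wild (f : ℝ → ℝ) (c σ : ℝ) : Set ℝ :=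
  {x | ∀ s, 0 < s → s ≤ σ → ∃ y, |x - y| ≤ s ∧ c * s ≤ |f x - f y|}

lemma isClosed_wild {f : ℝ → ℝ} (hf : Continuous f) {c : ℝ} (hc : 0 ≤ c) (σ : ℝ) :
    IsClosed (Wild f c σ) := by
  refine isClosed_of_closure_subset ?_
  intro x hx s hs hsσ
  obtain ⟨y₀, hy₀B, hy₀max⟩ := (isCompact_closedBall x s).exists_isMaxOn
    ⟨x, Metric.mem_closedBall_self hs.le⟩
    ((continuous_const.sub hf).abs).continuousOn
  refine ⟨y₀, ?_, ?_⟩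
  · have := Metric.mem_closedBall.1 hy₀B
    rw [Real.dist_eq] at this
    rwa [abs_sub_comm]
  · refine le_of_forall_pos_le_add fun ε hε => ?_
    obtain ⟨δ₁, hδ₁, hδ₁f⟩ := Metric.continuous_iff.1 hf x (ε/2) (by linarith)
    set δ : ℝ := min δ₁ (min s (ε / (2 * (c + 1)))) with hδdef
    have hδpos : 0 < δ := by
      refine lt_min hδ₁ (lt_min hs ?_)
      positivity
    obtain ⟨x', hx'W, hx'd⟩ := Metric.mem_closure_iff.1 hx δ hδpos
    set s' : ℝ := s - dist x x' with hs'def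
    have hds : dist x x' < s := lt_of_lt_of_le hx'd ((min_le_right _ _).trans (min_le_left _ _))
    have hs'pos : 0 < s' := by simp only [hs'def]; linarith
    have hs'σ : s' ≤ σ := by
      have := dist_nonneg (x := x) (y := x')
      simp only [hs'def]; linarith
    obtain ⟨y, hyd, hyo⟩ := hx'W s' hs'pos hs'σ
    have hyB : y ∈ closedBall x s := by
      rw [Metric.mem_closedBall, Real.dist_eq]
      have h1 : |x - y| ≤ |x - x'| + |x' - y| := abs_sub_le x x' y
      have h2 : |x - x'| = dist x x' := (Real.dist_eq x x').symm
      have h0 : |y - x| = |x - y| := abs_sub_comm y x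
      simp only [hs'def] at hyd
      linarith
    have hfx' : |f x' - f x| < ε / 2 := by
      have hd' : dist x' x < δ₁ := by
        rw [dist_comm]; exact lt_of_lt_of_le hx'd (min_le_left _ _)
      have := hδ₁f x' hd'
      rwa [Real.dist_eq] at this
    have hcd : c * dist x x' ≤ ε / 2 := by
      have h1 : dist x x' ≤ ε / (2 * (c + 1)) :=
        (hx'd.le.trans ((min_le_right _ _).trans (min_le_right _ _)))
      have hq2 : ε / (2*(c+1)) * (2*(c+1)) = ε := by field_simp
      have hq : 0 ≤ ε / (2*(c+1)) := by positivity
      nlinarith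
    have key : c * s - ε ≤ |f x - f y| := by
      have t1 : |f x' - f y| - |f x' - f x| ≤ |f x - f y| := by
        have h5 := abs_sub_abs_le_abs_sub (f x' - f y) (f x' - f x)
        have h4 : (f x' - f y) - (f x' - f x) = f x - f y := by ring
        rw [h4] at h5
        linarith
      have t3 : c * s' = c * s - c * dist x x' := by simp only [hs'def]; ring
      linarith [hfx'.le, hyo]
    have hle : |f x - f y| ≤ |f x - f y₀| := hy₀max hyB
    linarith


/-- Flat-points image bound via the 5r covering lemma. -/
lemma flat_image {f : ℝ → ℝ} {c σ : ℝ} (hc : 0 ≤ c) (hσ : 0 < σ) {E : Set ℝ}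
    (hE : ∀ z ∈ E, ∃ s, 0 < s ∧ s ≤ σ ∧ ∀ y, |z - y| ≤ s → |f z - f y| ≤ c * s) :
    volume (f '' E) ≤ ENNReal.ofReal (5 * c) * volume (Metric.thickening σ E) := by
  classical
  -- choose flat scales
  by_cases hEne : E = ∅
  · simp [hEne]
  set sel : E → ℝ := fun z => Classical.choose (hE z z.2) with hseldef
  have hsel : ∀ z : E, 0 < sel z ∧ sel z ≤ σ ∧
      ∀ y, |(z : ℝ) - y| ≤ sel z → |f z - f y| ≤ c * sel z :=
    fun z => Classical.choose_spec (hE z z.2)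
  obtain ⟨u, -, hdisj, hcover⟩ :=
    Vitali.exists_disjoint_subfamily_covering_enlargement_closedBall
      (Set.univ : Set E) (fun z => (z : ℝ)) (fun z => sel z / 5) (σ / 5)
      (fun z _ => by linarith [(hsel z).1, (hsel z).2.1]) 5 (by norm_num)
  have hucnt : u.Countable := by
    refine hdisj.countable_of_nonempty_interior fun z _ => ?_
    rw [interior_closedBall _ (by linarith [(hsel z).1] : sel z / 5 ≠ 0)]
    exact ⟨(z : ℝ), Metric.mem_ball_self (by linarith [(hsel z).1])⟩
  -- coverage of E by the enlarged balls
  have hcov2 : E ⊆ ⋃ b ∈ u, closedBall (b : ℝ) (sel b) := by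
    intro z hz
    obtain ⟨b, hb, hsub⟩ := hcover ⟨z, hz⟩ (mem_univ _)
    have hzmem : z ∈ closedBall (z : ℝ) (sel ⟨z, hz⟩ / 5) :=
      Metric.mem_closedBall_self (by linarith [(hsel ⟨z, hz⟩).1])
    have h5 : (5 : ℝ) * (sel b / 5) = sel b := by ring
    refine mem_biUnion hb ?_
    have := hsub hzmem
    rwa [h5] at this
  -- image bound
  have himg : f '' E ⊆ ⋃ b ∈ u, Icc (f b - c * sel b) (f b + c * sel b) := by
    rintro - ⟨z, hz, rfl⟩
    obtain ⟨b, hb, hzb⟩ := mem_iUnion₂.1 (hcov2 hz)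
    refine mem_biUnion hb ?_
    have hflat := (hsel b).2.2 z (by
      have := Metric.mem_closedBall.1 hzb
      rw [Real.dist_eq] at this
      rwa [abs_sub_comm])
    have := abs_le.1 hflat
    constructor <;> linarith [this.1, this.2]
  calc volume (f '' E) ≤ volume (⋃ b ∈ u, Icc (f b - c * sel b) (f b + c * sel b)) :=
        measure_mono himg
    _ ≤ ∑' b : u, volume (Icc (f b - c * sel b) (f b + c * sel b)) :=
        measure_biUnion_le _ hucnt _
    _ = ∑' b : u, ENNReal.ofReal (5 * c) * ENNReal.ofReal (2 * (sel b / 5)) := by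
        refine tsum_congr fun b => ?_
        rw [Real.volume_Icc, ← ENNReal.ofReal_mul (by positivity)]
        congr 1
        ring
    _ = ENNReal.ofReal (5 * c) * ∑' b : u, ENNReal.ofReal (2 * (sel b / 5)) :=
        ENNReal.tsum_mul_left
    _ ≤ ENNReal.ofReal (5 * c) * volume (Metric.thickening σ E) := by
        refine mul_le_mul_right ?_ _
        have hvol : ∀ b : u, ENNReal.ofReal (2 * (sel b / 5)) =
            volume (closedBall ((b : E) : ℝ) (sel b / 5)) := by
          intro b; rw [Real.volume_closedBall]
        rw [tsum_congr hvol]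
        have hmeas : ∀ b : E, b ∈ u → MeasurableSet (closedBall (b : ℝ) (sel b / 5)) :=
          fun b _ => measurableSet_closedBall
        rw [← measure_biUnion hucnt hdisj hmeas]
        refine measure_mono ?_
        refine iUnion₂_subset fun b _ => ?_
        intro w hw
        rw [Metric.mem_thickening_iff]
        refine ⟨(b : ℝ), b.2, ?_⟩
        have := Metric.mem_closedBall.1 hw
        have h1 := (hsel b).1
        have h2 := (hsel b).2.1
        calc dist w (b : ℝ) ≤ sel b / 5 := this
          _ < σ := by linarith


/-- Lusin (N) property on compact null sets, from everywhere finite `litLip`. -/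
lemma image_null {f : ℝ → ℝ} (hf : Continuous f) (hlip : ∀ x : ℝ, litLip f x ≠ ⊤)
    {A : Set ℝ} (hA : IsCompact A) (hA0 : volume A = 0) : volume (f '' A) = 0 := by
  have hcov : f '' A ⊆ ⋃ m : ℕ, f '' (A ∩ {x | litLip f x < (m : ℝ≥0∞)}) := by
    rintro - ⟨z, hz, rfl⟩
    obtain ⟨m, hm⟩ := ENNReal.exists_nat_gt (hlip z)
    exact mem_iUnion.2 ⟨m, mem_image_of_mem f ⟨hz, hm⟩⟩
  refine le_antisymm (le_trans (measure_mono hcov) ?_) zero_le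
  refine le_trans (measure_iUnion_le _) ?_
  have hzero : ∀ m : ℕ, volume (f '' (A ∩ {x | litLip f x < (m : ℝ≥0∞)})) = 0 := by
    intro m
    set Em := A ∩ {x | litLip f x < (m : ℝ≥0∞)} with hEm
    have hflat : ∀ σ : ℝ, 0 < σ → ∀ z ∈ Em, ∃ s, 0 < s ∧ s ≤ σ ∧
        ∀ y, |z - y| ≤ s → |f z - f y| ≤ (m : ℝ) * s := by
      intro σ hσ z hz
      have hzlt : litLip f z < (m : ℝ≥0∞) := hz.2
      have hfreq : ∃ᶠ s in 𝓝[>] (0:ℝ), Mf f z s < (m : ℝ≥0∞) :=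
        Filter.frequently_lt_of_liminf_lt (h := hzlt)
      obtain ⟨s, hsmem, hsM⟩ := Filter.frequently_iff.1 hfreq
        (Ioo_mem_nhdsGT_of_mem ⟨le_refl _, hσ⟩)
      have hMle : Mf f z s ≤ ENNReal.ofReal (m : ℝ) := by
        rw [ENNReal.ofReal_natCast]; exact hsM.le
      exact ⟨s, hsmem.1, hsmem.2.le, forall_of_Mf_le hsmem.1 (Nat.cast_nonneg m) hMle⟩
    have hbound : ∀ σ : ℝ, 0 < σ → volume (f '' Em) ≤
        ENNReal.ofReal (5 * (m : ℝ)) * volume (Metric.cthickening σ A) := by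
      intro σ hσ
      refine le_trans (flat_image (Nat.cast_nonneg m) hσ (hflat σ hσ)) ?_
      refine mul_le_mul_right (measure_mono ?_) _
      exact le_trans (Metric.thickening_subset_of_subset σ inter_subset_left)
        (Metric.thickening_subset_cthickening σ A)
    have htend : Tendsto (fun σ : ℝ => ENNReal.ofReal (5 * (m : ℝ)) *
        volume (Metric.cthickening σ A)) (𝓝[>] (0:ℝ)) (𝓝 0) := by
      have h1 : Tendsto (fun σ : ℝ => volume (Metric.cthickening σ A)) (𝓝 (0:ℝ))
          (𝓝 (volume A)) := tendsto_measure_cthickening_of_isCompact hA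
      rw [hA0] at h1
      have h2 : Tendsto (fun σ : ℝ => volume (Metric.cthickening σ A)) (𝓝[>] (0:ℝ)) (𝓝 0) :=
        h1.mono_left nhdsWithin_le_nhds
      have h3 := ENNReal.Tendsto.const_mul (a := ENNReal.ofReal (5 * (m:ℝ))) h2
        (Or.inr ENNReal.ofReal_ne_top)
      simpa using h3
    have hev : ∀ᶠ σ in 𝓝[>] (0:ℝ), volume (f '' Em) ≤
        ENNReal.ofReal (5 * (m : ℝ)) * volume (Metric.cthickening σ A) :=
      eventually_nhdsWithin_of_forall (fun σ hσ => hbound σ hσ)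
    have := ge_of_tendsto htend hev
    exact le_antisymm this zero_le
  simp [hzero]

lemma exists_L_point {f : ℝ → ℝ} (hf : Continuous f) (hlip : ∀ x : ℝ, litLip f x ≠ ⊤)
    {a b : ℝ} (hnull : volume (Ioo a b \ {x | bigLip f x = ⊤}) = 0)
    {A : Set ℝ} (hA : IsCompact A) (hAsub : A ⊆ Ioo a b)
    (him : volume (f '' A) ≠ 0) : ∃ z ∈ A, bigLip f z = ⊤ := by
  by_contra h
  push_neg at h
  rcases eq_or_ne (volume A) 0 with h0 | h0
  · exact him (image_null hf hlip hA h0)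
  · have hsub : A ⊆ Ioo a b \ {x | bigLip f x = ⊤} := fun z hz => ⟨hAsub hz, h z hz⟩
    exact h0 (le_antisymm (le_trans (measure_mono hsub) hnull.le) zero_le)

lemma exists_event {f : ℝ → ℝ} {z : ℝ} (hz : bigLip f z = ⊤) {K ε : ℝ}
    (hK : 0 ≤ K) (hε : 0 < ε) :
    ∃ t y, 0 < t ∧ t ≤ ε ∧ |z - y| ≤ t ∧ K * t < |f z - f y| := by
  have hfreq : ∃ᶠ t in 𝓝[>] (0:ℝ), ENNReal.ofReal K < Mf f z t := by
    by_contra hcon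
    rw [Filter.not_frequently] at hcon
    have hle : bigLip f z ≤ ENNReal.ofReal K := by
      refine Filter.limsup_le_of_le ?_ ?_
      · isBoundedDefault
      · filter_upwards [hcon] with t ht
        exact not_lt.1 ht
    rw [hz] at hle
    exact ENNReal.ofReal_ne_top (top_le_iff.1 hle)
  obtain ⟨t, htmem, htM⟩ := Filter.frequently_iff.1 hfreq
    (Ioo_mem_nhdsGT_of_mem ⟨le_refl _, hε⟩)
  have hy : ∃ y, |z - y| ≤ t ∧ ENNReal.ofReal K < ENNReal.ofReal (|f z - f y| / t) := by
    by_contra hcon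
    push_neg at hcon
    have : Mf f z t ≤ ENNReal.ofReal K := iSup₂_le fun y hy => hcon y hy
    exact absurd htM (not_lt.2 this)
  obtain ⟨y, hyz, hylt⟩ := hy
  have h1 : K < |f z - f y| / t := (ENNReal.ofReal_lt_ofReal_iff_of_nonneg hK).1 hylt
  exact ⟨t, y, htmem.1, htmem.2.le, hyz, (lt_div_iff₀ htmem.1).1 h1⟩

lemma image_ball_lower {f : ℝ → ℝ} (hf : Continuous f) {z y t : ℝ} (hy : |z - y| ≤ t) :
    ENNReal.ofReal (|f z - f y|) ≤ volume (f '' closedBall z t) := by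
  have hsub : uIcc z y ⊆ closedBall z t := by
    intro w hw
    rw [Set.mem_uIcc] at hw
    rw [Metric.mem_closedBall, Real.dist_eq, abs_le]
    rcases abs_le.1 hy with ⟨h1, h2⟩
    rcases hw with ⟨hw1, hw2⟩ | ⟨hw1, hw2⟩ <;> constructor <;> linarith
  have hIVT : uIcc (f z) (f y) ⊆ f '' uIcc z y := intermediate_value_uIcc hf.continuousOn
  calc ENNReal.ofReal (|f z - f y|) = volume (uIcc (f z) (f y)) := by
        rw [Real.volume_interval, abs_sub_comm]
    _ ≤ volume (f '' uIcc z y) := measure_mono hIVT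
    _ ≤ volume (f '' closedBall z t) := measure_mono (image_mono hsub)

/-- Core step: from an infinite-`bigLip` point, produce a small ball on which the uniformly
wild set at level `m` has `f`-image of positive measure. -/
lemma core_step {f : ℝ → ℝ} (hf : Continuous f) {z : ℝ} (hz : bigLip f z = ⊤)
    (m : ℕ) {ε : ℝ} (hε : 0 < ε) :
    ∃ t, 0 < t ∧ t ≤ ε ∧ volume (f '' (closedBall z t ∩ Wild f (m : ℝ) (6 * t))) ≠ 0 := by
  obtain ⟨t, y, ht, htε, hty, hev⟩ := exists_event hz
    (K := 70 * (m : ℝ) + 1) (by positivity) hε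
  refine ⟨t, ht, htε, ?_⟩
  intro hWzero
  set W := Wild f (m : ℝ) (6 * t) with hWdef
  have hflat : ∀ x' ∈ closedBall z t \ W, ∃ s, 0 < s ∧ s ≤ 6 * t ∧
      ∀ y', |x' - y'| ≤ s → |f x' - f y'| ≤ (m : ℝ) * s := by
    intro x' hx'
    have hx2 : ¬ ∀ s, 0 < s → s ≤ 6 * t → ∃ y, |x' - y| ≤ s ∧ (m : ℝ) * s ≤ |f x' - f y| :=
      hx'.2
    push_neg at hx2
    obtain ⟨s, hs, hs6, hnw⟩ := hx2
    exact ⟨s, hs, hs6, fun y' hy' => (hnw y' hy').le⟩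
  have h2 := flat_image (f := f) (Nat.cast_nonneg m) (by linarith : (0:ℝ) < 6 * t) hflat
  have h3 : Metric.thickening (6 * t) (closedBall z t \ W) ⊆ closedBall z (7 * t) := by
    intro w hw
    rw [Metric.mem_thickening_iff] at hw
    obtain ⟨v, hv, hwv⟩ := hw
    have hvz : dist v z ≤ t := Metric.mem_closedBall.1 hv.1
    rw [Metric.mem_closedBall]
    calc dist w z ≤ dist w v + dist v z := dist_triangle _ _ _
      _ ≤ 6 * t + t := by linarith [hwv.le]
      _ = 7 * t := by ring
  have h4 : volume (f '' (closedBall z t \ W)) ≤ ENNReal.ofReal (70 * (m : ℝ) * t) := by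
    refine le_trans h2 ?_
    have hh : volume (Metric.thickening (6 * t) (closedBall z t \ W)) ≤
        ENNReal.ofReal (2 * (7 * t)) := by
      refine le_trans (measure_mono h3) ?_
      rw [Real.volume_closedBall]
    calc ENNReal.ofReal (5 * (m : ℝ)) * volume (Metric.thickening (6 * t) (closedBall z t \ W))
        ≤ ENNReal.ofReal (5 * (m : ℝ)) * ENNReal.ofReal (2 * (7 * t)) :=
          mul_le_mul_right hh _
      _ = ENNReal.ofReal (70 * (m : ℝ) * t) := by
          rw [← ENNReal.ofReal_mul (by positivity)]
          congr 1
          ring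
  have h5 : ENNReal.ofReal ((70 * (m : ℝ) + 1) * t) ≤ volume (f '' closedBall z t) :=
    le_trans (ENNReal.ofReal_le_ofReal hev.le) (image_ball_lower hf hty)
  have h6 : volume (f '' closedBall z t) ≤
      volume (f '' (closedBall z t \ W)) + volume (f '' (closedBall z t ∩ W)) := by
    refine le_trans (measure_mono ?_) (measure_union_le _ _)
    rintro - ⟨w, hw, rfl⟩
    by_cases hwW : w ∈ W
    · exact Or.inr (mem_image_of_mem f ⟨hw, hwW⟩)
    · exact Or.inl (mem_image_of_mem f ⟨hw, hwW⟩)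
  rw [hWzero, add_zero] at h6
  have h7 : ENNReal.ofReal ((70 * (m : ℝ) + 1) * t) ≤ ENNReal.ofReal (70 * (m : ℝ) * t) :=
    le_trans h5 (le_trans h6 h4)
  have h8 : (70 * (m : ℝ) + 1) * t ≤ 70 * (m : ℝ) * t :=
    (ENNReal.ofReal_le_ofReal_iff (by positivity)).1 h7
  nlinarith


lemma dependent_choice {α : Type*} (P : ℕ → α → Prop) (R : ℕ → α → α → Prop)
    (h0 : ∃ x, P 0 x) (hstep : ∀ n x, P n x → ∃ y, P (n+1) y ∧ R n x y) :
    ∃ g : ℕ → α, (∀ n, P n (g n)) ∧ ∀ n, R n (g n) (g (n+1)) := by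
  choose F hF1 hF2 using hstep
  obtain ⟨x0, hx0⟩ := h0
  let G : ∀ n : ℕ, {x : α // P n x} := fun n =>
    Nat.rec ⟨x0, hx0⟩ (fun n p => ⟨F n p.1 p.2, hF1 n p.1 p.2⟩) n
  exact ⟨fun n => (G n).1, fun n => (G n).2, fun n => hF2 n (G n).1 (G n).2⟩

/-- The `Good` invariant for the recursive construction. -/
def Good (f : ℝ → ℝ) (a b : ℝ) (n : ℕ) (p : ℝ × ℝ) : Prop :=
  0 < p.2 ∧ closedBall p.1 (2 * p.2) ⊆ Ioo a b ∧
    volume (f '' (closedBall p.1 p.2 ∩ Wild f ((n : ℝ) + 1) (6 * p.2))) ≠ 0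

lemma good_step {f : ℝ → ℝ} (hf : Continuous f) (hlip : ∀ x : ℝ, litLip f x ≠ ⊤)
    {a b : ℝ} (hnull : volume (Ioo a b \ {x | bigLip f x = ⊤}) = 0) :
    ∀ (n : ℕ) (p : ℝ × ℝ), Good f a b n p →
      ∃ q : ℝ × ℝ, Good f a b (n+1) q ∧
        (dist q.1 p.1 ≤ p.2 ∧ q.1 ∈ Wild f ((n : ℝ)+1) (6 * p.2) ∧ 0 < q.2 ∧ q.2 ≤ p.2/10) := by
  rintro n ⟨z, t⟩ ⟨ht, hsub, him⟩
  simp only at ht hsub him ⊢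
  have hA : IsCompact (closedBall z t ∩ Wild f ((n : ℝ)+1) (6 * t)) :=
    (isCompact_closedBall _ _).inter_right (isClosed_wild hf (by positivity) _)
  have hAsub : closedBall z t ∩ Wild f ((n : ℝ)+1) (6 * t) ⊆ Ioo a b := by
    intro w hw
    exact hsub (closedBall_subset_closedBall (by linarith) hw.1)
  obtain ⟨z', hz'A, hz'L⟩ := exists_L_point hf hlip hnull hA hAsub him
  obtain ⟨t', ht'pos, ht'le, him'⟩ := core_step hf hz'L (n+2) (ε := t/10) (by linarith)
  have hz'B : dist z' z ≤ t := Metric.mem_closedBall.1 hz'A.1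
  refine ⟨(z', t'), ⟨ht'pos, ?_, ?_⟩, hz'B, hz'A.2, ht'pos, ht'le⟩
  · intro w hw
    apply hsub
    rw [Metric.mem_closedBall] at hw ⊢
    calc dist w z ≤ dist w z' + dist z' z := dist_triangle _ _ _
      _ ≤ 2 * t' + t := by linarith
      _ ≤ 2 * t := by linarith
  · show volume (f '' (closedBall z' t' ∩ Wild f (((n+1 : ℕ) : ℝ) + 1) (6 * t'))) ≠ 0
    rw [show (((n+1 : ℕ) : ℝ) + 1) = ((n + 2 : ℕ) : ℝ) by push_cast; ring]
    exact him'

lemma good_base {f : ℝ → ℝ} (hf : Continuous f)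
    {a b : ℝ} (hab : a < b)
    (hnull : volume (Ioo a b \ {x | bigLip f x = ⊤}) = 0) :
    ∃ p : ℝ × ℝ, Good f a b 0 p := by
  have hLne : ∃ x₀, bigLip f x₀ = ⊤ ∧ x₀ ∈ Ioo a b := by
    by_contra h
    push_neg at h
    have hsub : Ioo a b ⊆ Ioo a b \ {x | bigLip f x = ⊤} := by
      intro w hw
      exact ⟨hw, fun hc => h w hc hw⟩
    have := le_trans (measure_mono hsub) hnull.le
    rw [Real.volume_Ioo] at this
    have hpos : (0:ℝ≥0∞) < ENNReal.ofReal (b - a) := ENNReal.ofReal_pos.2 (by linarith)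
    exact absurd (le_antisymm this zero_le) hpos.ne'
  obtain ⟨x₀, hx₀L, hx₀I⟩ := hLne
  set δ : ℝ := min (x₀ - a) (b - x₀) with hδ
  have hδpos : 0 < δ := lt_min (by linarith [hx₀I.1]) (by linarith [hx₀I.2])
  obtain ⟨t₀, ht₀pos, ht₀le, him⟩ := core_step hf hx₀L 1 (ε := δ/4) (by linarith)
  refine ⟨(x₀, t₀), ht₀pos, ?_, ?_⟩
  · intro w hw
    rw [Metric.mem_closedBall, Real.dist_eq] at hw
    rcases abs_le.1 hw with ⟨h1, h2⟩
    have hda : δ ≤ x₀ - a := min_le_left _ _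
    have hdb : δ ≤ b - x₀ := min_le_right _ _
    rw [Set.mem_Ioo]
    constructor <;> nlinarith
  · have hcast : (((0 : ℕ) : ℝ) + 1) = ((1 : ℕ) : ℝ) := by norm_num
    simpa [hcast] using him

/-- Main lemma: the set where `bigLip` is infinite cannot have full measure in an interval. -/
lemma not_conull {f : ℝ → ℝ} (hf : Continuous f) (hlip : ∀ x : ℝ, litLip f x ≠ ⊤)
    {a b : ℝ} (hab : a < b)
    (hnull : volume (Ioo a b \ {x | bigLip f x = ⊤}) = 0) : False := by
  classical
  obtain ⟨g, hg, hgrel⟩ := dependent_choice (Good f a b)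
    (fun (n : ℕ) (p q : ℝ × ℝ) => dist q.1 p.1 ≤ p.2 ∧ q.1 ∈ Wild f ((n : ℝ)+1) (6 * p.2) ∧ 0 < q.2 ∧ q.2 ≤ p.2/10)
    (good_base hf hab hnull) (good_step hf hlip hnull)
  set z : ℕ → ℝ := fun n => (g n).1 with hzdef
  set t : ℕ → ℝ := fun n => (g n).2 with htdef
  have htpos : ∀ n, 0 < t n := fun n => (hg n).1
  have hdz : ∀ n, dist (z (n+1)) (z n) ≤ t n := fun n => (hgrel n).1
  have hzw : ∀ n : ℕ, z (n+1) ∈ Wild f ((n : ℝ)+1) (6 * t n) := fun n => (hgrel n).2.1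
  have htdec : ∀ n, t (n+1) ≤ t n / 10 := fun n => (hgrel n).2.2.2
  have hanti : Antitone t := antitone_nat_of_succ_le (fun n => (htdec n).trans (by linarith [htpos n]))
  have hdecay : ∀ n, t n ≤ t 0 * (1/10)^n := by
    intro n
    induction n with
    | zero => simp
    | succ n ih =>
      have := htdec n
      calc t (n+1) ≤ t n / 10 := this
        _ ≤ (t 0 * (1/10)^n) / 10 := by linarith
        _ = t 0 * (1/10)^(n+1) := by ring
  have ht0 : Tendsto t atTop (𝓝 0) := by
    refine squeeze_zero (fun n => (htpos n).le) hdecay ?_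
    have h1 : Tendsto (fun n : ℕ => (1/10 : ℝ)^n) atTop (𝓝 0) :=
      tendsto_pow_atTop_nhds_zero_of_lt_one (by norm_num) (by norm_num)
    have := h1.const_mul (t 0)
    simpa using this
  have hcauchy : CauchySeq z := by
    refine cauchySeq_of_le_geometric (1/10) (t 0) (by norm_num) (fun n => ?_)
    rw [dist_comm]
    exact (hdz n).trans (hdecay n)
  obtain ⟨xh, hxh⟩ := cauchySeq_tendsto_of_complete hcauchy
  have hdd : ∀ n m, n ≤ m → dist (z m) (z n) ≤ 2 * t n - 2 * t m := by
    intro n m hnm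
    induction m, hnm using Nat.le_induction with
    | base => simp
    | succ m hm ih =>
      have h2 : 2 * t (m+1) ≤ t m := by linarith [htdec m, htpos m]
      calc dist (z (m+1)) (z n) ≤ dist (z (m+1)) (z m) + dist (z m) (z n) := dist_triangle _ _ _
        _ ≤ t m + (2 * t n - 2 * t m) := by linarith [hdz m]
        _ ≤ 2 * t n - 2 * t (m+1) := by linarith
  have hxd : ∀ n, dist xh (z n) ≤ 2 * t n := by
    intro n
    have h1 : Tendsto (fun m => dist (z m) (z n)) atTop (𝓝 (dist xh (z n))) :=
      hxh.dist tendsto_const_nhds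
    refine le_of_tendsto h1 (eventually_atTop.2 ⟨n, fun m hm => ?_⟩)
    exact (hdd n m hm).trans (by linarith [htpos m])
  -- final: litLip f xh = ⊤
  have hwild : ∀ M : ℕ, (M : ℝ≥0∞) ≤ litLip f xh := by
    intro M
    set N : ℕ := 3 * M + 3 with hN
    have h6tN : 0 < 6 * t N := by linarith [htpos N]
    refine Filter.le_liminf_of_le ?_ ?_
    · isBoundedDefault
    · filter_upwards [Ioo_mem_nhdsGT_of_mem ⟨le_refl (0:ℝ), h6tN⟩] with σ hσ
      obtain ⟨hσ0, hσN⟩ := hσ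
      have hex : ∃ k, 6 * t (k+1) < σ := by
        have h1 : Tendsto (fun k : ℕ => 6 * t (k+1)) atTop (𝓝 0) := by
          have h2 : Tendsto (fun k : ℕ => t (k+1)) atTop (𝓝 0) :=
            ht0.comp (tendsto_add_atTop_nat 1)
          have := h2.const_mul (6:ℝ)
          simpa using this
        exact (h1.eventually_lt_const hσ0).exists
      obtain ⟨r', hr'1, hr'min⟩ : ∃ r : ℕ, (6 * t (r+1) < σ) ∧ ∀ m < r, ¬(6 * t (m+1) < σ) :=
        ⟨Nat.find hex, Nat.find_spec hex, fun m hm => Nat.find_min hex hm⟩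
      have hr'N : N ≤ r' := by
        by_contra hcon
        push_neg at hcon
        have h1 : t N ≤ t (r'+1) := hanti (by omega)
        linarith
      have hσle : σ ≤ 6 * t r' := by
        cases r' with
        | zero =>
          have : t N ≤ t 0 := hanti (by omega)
          linarith
        | succ s =>
          have := hr'min s (by omega)
          push_neg at this
          exact this
      set c : ℝ := (r' : ℝ) + 1 with hc
      have hcpos : 0 < c := by positivity
      set z' : ℝ := z (r'+1) with hz'
      have hz'w : z' ∈ Wild f c (6 * t r') := hzw r'
      have hdz' : dist xh z' ≤ 2 * t (r'+1) := hxd (r'+1)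
      have hdlt : 3 * dist xh z' < σ := by linarith
      set s : ℝ := σ - dist xh z' with hs
      have hs1 : 0 < s := by
        have := dist_nonneg (x := xh) (y := z')
        simp only [hs]; linarith
      have hs2 : s ≤ 6 * t r' := by
        have := dist_nonneg (x := xh) (y := z')
        simp only [hs]; linarith
      obtain ⟨y, hy1, hy2⟩ := hz'w s hs1 hs2
      have hcs : c * (2*σ/3) ≤ c * s := by
        have : 2*σ/3 ≤ s := by simp only [hs]; linarith
        exact mul_le_mul_of_nonneg_left this hcpos.le
      have hmax : ∃ w, |xh - w| ≤ σ ∧ c * σ / 3 ≤ |f xh - f w| := by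
        by_cases hcase : c * σ / 3 ≤ |f xh - f z'|
        · refine ⟨z', ?_, hcase⟩
          rw [← Real.dist_eq]
          linarith
        · push_neg at hcase
          refine ⟨y, ?_, ?_⟩
          · have h1 : |xh - y| ≤ |xh - z'| + |z' - y| := abs_sub_le _ _ _
            have h2 : |xh - z'| = dist xh z' := (Real.dist_eq _ _).symm
            simp only [hs] at hy1
            linarith
          · have h3 : |f z' - f y| ≤ |f z' - f xh| + |f xh - f y| := abs_sub_le _ _ _
            have h4 : |f z' - f xh| = |f xh - f z'| := abs_sub_comm _ _
            nlinarith
      obtain ⟨w, hw1, hw2⟩ := hmax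
      have hMf : ENNReal.ofReal (c / 3) ≤ Mf f xh σ := by
        refine le_trans (ENNReal.ofReal_le_ofReal ?_) (le_Mf f hw1)
        rw [le_div_iff₀ hσ0]
        nlinarith
      have hMc : (M : ℝ) ≤ c / 3 := by
        have h5 : ((N:ℕ) : ℝ) ≤ (r' : ℝ) := Nat.cast_le.2 hr'N
        have h6 : ((N:ℕ) : ℝ) = 3 * (M:ℝ) + 3 := by rw [hN]; push_cast; ring
        simp only [hc]
        linarith [h6 ▸ h5]
      calc (M : ℝ≥0∞) = ENNReal.ofReal (M : ℝ) := (ENNReal.ofReal_natCast M).symm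
        _ ≤ ENNReal.ofReal (c / 3) := ENNReal.ofReal_le_ofReal hMc
        _ ≤ Mf f xh σ := hMf
  have htop : litLip f xh = ⊤ := by
    refine top_le_iff.1 ?_
    rw [← ENNReal.iSup_natCast]
    exact iSup_le hwild
  exact hlip xh htop


/-- The open sets used for the `Gδ` representation. -/
def Uset (f : ℝ → ℝ) (K n : ℕ) : Set ℝ :=
  {x | ∃ t y, 0 < t ∧ t < 1/((n:ℝ)+1) ∧ |x - y| < t ∧ (K:ℝ) * t < |f x - f y|}

lemma isOpen_Uset {f : ℝ → ℝ} (hf : Continuous f) (K n : ℕ) : IsOpen (Uset f K n) := by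
  rw [isOpen_iff_mem_nhds]
  intro x hx
  obtain ⟨t, y, ht, htn, hxy, hK⟩ := hx
  have hopen : IsOpen {w : ℝ | |w - y| < t ∧ (K:ℝ)*t < |f w - f y|} := by
    refine IsOpen.inter ?_ ?_
    · exact isOpen_lt ((continuous_id.sub continuous_const).abs) continuous_const
    · exact isOpen_lt continuous_const ((hf.sub continuous_const).abs)
  exact mem_of_superset (hopen.mem_nhds ⟨hxy, hK⟩)
    (fun w hw => ⟨t, y, ht, htn, hw.1, hw.2⟩)

lemma bigLip_top_eq {f : ℝ → ℝ} (hf : Continuous f) :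
    {x | bigLip f x = ⊤} = ⋂ (K : ℕ) (n : ℕ), Uset f K n := by
  ext x
  simp only [mem_setOf_eq, mem_iInter]
  constructor
  · intro hx K n
    have hn1 : (0:ℝ) < 1/((n:ℝ)+1) := by positivity
    obtain ⟨t, y, ht, htε, hxy, hKt⟩ := exists_event hx (K := (K:ℝ))
      (Nat.cast_nonneg K) (ε := 1/(2*((n:ℝ)+1))) (by positivity)
    have htn : t < 1/((n:ℝ)+1) := by
      have h2 : 1/(2*((n:ℝ)+1)) < 1/((n:ℝ)+1) := by
        rw [div_lt_div_iff₀ (by positivity) (by positivity)]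
        nlinarith
      linarith
    set v : ℝ := |f x - f y| with hv
    have hv0 : 0 < v := lt_of_le_of_lt (mul_nonneg (Nat.cast_nonneg K) ht.le) hKt
    set δ : ℝ := min (1/((n:ℝ)+1) - t) ((v - (K:ℝ)*t)/((K:ℝ)+1)) with hδ
    have hδpos : 0 < δ := by
      refine lt_min (by linarith) (div_pos (by linarith) (by positivity))
    refine ⟨t + δ/2, y, by linarith, ?_, ?_, ?_⟩
    · have h1 : δ ≤ 1/((n:ℝ)+1) - t := min_le_left _ _
      linarith
    · linarith
    · have h2 : δ ≤ (v - (K:ℝ)*t)/((K:ℝ)+1) := min_le_right _ _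
      have h3 : (K:ℝ) * δ ≤ ((K:ℝ)+1) * ((v - (K:ℝ)*t)/((K:ℝ)+1)) := by
        have hK1 : (0:ℝ) < (K:ℝ)+1 := by positivity
        have := mul_le_mul_of_nonneg_left h2 (Nat.cast_nonneg K)
        nlinarith
      have h4 : ((K:ℝ)+1) * ((v - (K:ℝ)*t)/((K:ℝ)+1)) = v - (K:ℝ)*t := by
        field_simp
      rw [h4] at h3
      nlinarith
  · intro hx
    refine top_le_iff.1 ?_
    rw [← ENNReal.iSup_natCast]
    refine iSup_le fun K => ?_
    refine Filter.le_limsup_of_frequently_le ?_ ?_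
    · rw [Filter.frequently_iff]
      intro U hU
      obtain ⟨u, hu0, husub⟩ := mem_nhdsGT_iff_exists_Ioo_subset.1 hU
      obtain ⟨n, hn⟩ := exists_nat_one_div_lt (mem_Ioi.1 hu0)
      obtain ⟨t, y, ht, htn, hxy, hKt⟩ := hx K n
      have htu : t < u := by
        have : (1:ℝ)/((n:ℝ)+1) < u := by
          have := hn
          push_cast at this ⊢
          linarith
        linarith
      refine ⟨t, husub ⟨ht, htu⟩, ?_⟩
      calc (K:ℝ≥0∞) = ENNReal.ofReal (K:ℝ) := (ENNReal.ofReal_natCast K).symm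
        _ ≤ ENNReal.ofReal (|f x - f y| / t) := by
            refine ENNReal.ofReal_le_ofReal ?_
            rw [le_div_iff₀ ht]
            exact hKt.le
        _ ≤ Mf f x t := le_Mf f hxy.le
    · isBoundedDefault

end LipAux

/-- A set `E ⊆ ℝ` is trim if `λ(E ∩ (a,b)) < b - a` for every open interval `(a,b)`. -/
def Trim (E : Set ℝ) : Prop :=
  ∀ a b : ℝ, a < b → volume (E ∩ Ioo a b) < ENNReal.ofReal (b - a)

/-- If `f : ℝ → ℝ` is continuous and `lip f(x) < ∞` everywhere (i.e. `l_f^∞ = ∅`),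
then `L_f^∞ = {x : Lip f(x) = ∞}` is a trim `G_δ` set. -/
theorem Lip_infinite_set_isGdelta_and_trim (f : ℝ → ℝ) (hf : Continuous f)
    (hlip : ∀ x : ℝ, litLip f x ≠ ⊤) :
    IsGδ {x : ℝ | bigLip f x = ⊤} ∧ Trim {x : ℝ | bigLip f x = ⊤} := by
  have hGδ : IsGδ {x : ℝ | bigLip f x = ⊤} := by
    rw [LipAux.bigLip_top_eq hf]
    exact IsGδ.iInter fun K => IsGδ.iInter fun n => (LipAux.isOpen_Uset hf K n).isGδ
  refine ⟨hGδ, ?_⟩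
  intro a b hab
  have hmeas : MeasurableSet {x : ℝ | bigLip f x = ⊤} := hGδ.measurableSet
  have hle : volume ({x : ℝ | bigLip f x = ⊤} ∩ Ioo a b) ≤ ENNReal.ofReal (b - a) := by
    refine le_trans (measure_mono inter_subset_right) ?_
    rw [Real.volume_Ioo]
  rcases lt_or_eq_of_le hle with h | h
  · exact h
  · exfalso
    have hIoofin : volume (Ioo a b) ≠ ⊤ := by
      rw [Real.volume_Ioo]; exact ENNReal.ofReal_ne_top
    have hsplit : volume (Ioo a b ∩ {x : ℝ | bigLip f x = ⊤}) +
        volume (Ioo a b \ {x : ℝ | bigLip f x = ⊤}) = volume (Ioo a b) :=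
      measure_inter_add_diff _ hmeas
    have heq : volume (Ioo a b ∩ {x : ℝ | bigLip f x = ⊤}) = volume (Ioo a b) := by
      rw [inter_comm, h, Real.volume_Ioo]
    rw [heq] at hsplit
    nth_rewrite 2 [← add_zero (volume (Ioo a b))] at hsplit
    have hnull : volume (Ioo a b \ {x : ℝ | bigLip f x = ⊤}) = 0 :=
      (ENNReal.add_right_inj hIoofin).1 hsplit
    exact LipAux.not_conull hf hlip hab hnull
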